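/- Let F be a field and let H_1, ..., H_n be ℓ × ℓ diagonal matrices over F such that for every subset S ⊆ [n] with |S| = r, and every diagonal index b, the r values {(H_i)_{bb} : i ∈ S} are pairwise distinct. Then for every S ⊆ [n] with |S| = r, the rℓ × rℓ block matrix whose (j, i) block (j ∈ [r], i ∈ S) is H_i^(j-1) is invertible. -/
import Mathlib


theorem stmt_15 (F : Type*) [Field F] (n r ℓ : ℕ)
    (d : Fin n → Fin ℓ → F)
    (hdist : ∀ S : Finset (Fin n), S.card = r → ∀ b : Fin ℓ,
      ∀ i ∈ S, ∀ i' ∈ S, d i b = d i' b → i = i') :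
    ∀ (S : Finset (Fin n)) (hS : S.card = r),
      IsUnit (Matrix.of fun p p' : Fin r × Fin ℓ =>
        if p.2 = p'.2 then (d (S.orderIsoOfFin hS p'.1 : Fin n) p.2) ^ (p.1 : ℕ) else 0) := by
  intro S hS
  have hM : (Matrix.of fun p p' : Fin r × Fin ℓ =>
      if p.2 = p'.2 then (d (S.orderIsoOfFin hS p'.1 : Fin n) p.2) ^ (p.1 : ℕ) else 0)
      = Matrix.blockDiagonal (fun b => (Matrix.vandermonde
        (fun i : Fin r => d (S.orderIsoOfFin hS i : Fin n) b)).transpose) := by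
    ext ⟨j, b⟩ ⟨i, b'⟩
    simp only [Matrix.of_apply, Matrix.blockDiagonal_apply, Matrix.transpose_apply,
      Matrix.vandermonde_apply]

  rw [hM, Matrix.isUnit_iff_isUnit_det, Matrix.det_blockDiagonal, isUnit_iff_ne_zero,
    Finset.prod_ne_zero_iff]
  intro b _
  rw [Matrix.det_transpose, Ne, Matrix.det_vandermonde_eq_zero_iff]
  rintro ⟨i, i', hdd, hne⟩
  exact hne (Subtype.coe_injective.comp (S.orderIsoOfFin hS).injective
    (hdist S hS b _ (S.orderIsoOfFin hS i).2 _ (S.orderIsoOfFin hS i').2 hdd))
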